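/- For the mould paj with paj^m(x_1,...,x_m) = 1/(x_1(x_1+x_2)···(x_1+...+x_m)) and mupaj with mupaj^m(x_1,...,x_m) = (−1)^m/(x_m(x_m+x_{m−1})···(x_m+...+x_1)), mupaj is the inverse of paj in the mould algebra: paj × mupaj = mupaj × paj = 1, where (M × N)^m = Σ_{k=0}^m M^k(x_1,...,x_k)N^{m−k}(x_{k+1},...,x_m). -/

import Mathlib

open scoped BigOperators

/-- All shuffle interleavings of two lists, preserving the relative order of each. -/
def shuffles {α : Type*} : List α → List α → List (List α)
  | [], ys => [ys]
  | xs, [] => [xs]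
  | x :: xs, y :: ys =>
      ((shuffles xs (y :: ys)).map (x :: ·)) ++ ((shuffles (x :: xs) ys).map (y :: ·))
termination_by xs ys => xs.length + ys.length
decreasing_by all_goals (simp; try omega)

variable {K : Type*} [Field K]

/-- The shuffle sum of a mould `M` over all interleavings of `a` and `b`. -/
def shSum (M : List K → K) (a b : List K) : K := ((shuffles a b).map M).sum

/-- The mould (concatenation-deconcatenation) product. -/
def mmul (M N : List K → K) (w : List K) : K :=
  ∑ k ∈ Finset.range (w.length + 1), M (w.take k) * N (w.drop k)

/-- The unit mould: `1` in length `0` and `0` otherwise. -/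
def one : List K → K := fun l => match l with | [] => 1 | _ => 0

/-- The field `ℚ(x_0, x_1, x_2, …)` of rational functions, in which all the Laurent-series
identities among the moulds considered here take place. -/
noncomputable abbrev KK : Type := FractionRing (MvPolynomial ℕ ℚ)

/-- The formal variables `x_i`, viewed inside `KK`. -/
noncomputable def Xv (i : ℕ) : KK :=
  algebraMap (MvPolynomial ℕ ℚ) KK (MvPolynomial.X i)

/-- The mould `paj`: `paj^m(x_1,…,x_m) = 1/(x_1(x_1+x_2)⋯(x_1+⋯+x_m))`, `paj^0 = 1`. -/
noncomputable def paj {K : Type*} [Field K] (l : List K) : K :=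
  (∏ k ∈ Finset.range l.length, (l.take (k + 1)).sum)⁻¹

/-- The mould `mupaj`: `mupaj^m(x_1,…,x_m) = (−1)^m/(x_m(x_m+x_{m−1})⋯(x_m+⋯+x_1))`. -/
noncomputable def mupaj {K : Type*} [Field K] (l : List K) : K :=
  (-1 : K) ^ l.length * (∏ k ∈ Finset.range l.length, (l.drop k).sum)⁻¹

lemma one_nil : (one : List K → K) [] = 1 := rfl

lemma one_ne {l : List K} (h : l ≠ []) : (one : List K → K) l = 0 := by
  cases l with
  | nil => exact absurd rfl h
  | cons a t => rfl

lemma mmul_one_right (M : List K → K) (w : List K) : mmul M one w = M w := by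
  unfold mmul
  rw [Finset.sum_eq_single w.length]
  · simp [one, List.take_length, List.drop_length]
  · intro k hk hne
    rw [Finset.mem_range] at hk
    rw [one_ne, mul_zero]
    rw [ne_eq, List.drop_eq_nil_iff]
    omega
  · intro h; exact absurd (Finset.self_mem_range_succ _) h

lemma mmul_one_left (M : List K → K) (w : List K) : mmul one M w = M w := by
  unfold mmul
  rw [Finset.sum_eq_single 0]
  · simp [one]
  · intro k hk hne
    rw [Finset.mem_range] at hk
    rw [one_ne, zero_mul]
    rw [ne_eq, List.take_eq_nil_iff]
    push_neg
    constructor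
    · omega
    · intro h; subst h; simp at hk; omega
  · intro h; exact absurd (by simp) h

lemma mmul_assoc (A B C : List K → K) (w : List K) :
    mmul (mmul A B) C w = mmul A (mmul B C) w := by
  unfold mmul
  have hL : ∀ k ∈ Finset.range (w.length + 1),
      (∑ j ∈ Finset.range ((w.take k).length + 1), A ((w.take k).take j) * B ((w.take k).drop j)) * C (w.drop k)
      = ∑ j ∈ Finset.range (k + 1), A (w.take j) * B ((w.drop j).take (k - j)) * C (w.drop k) := by
    intro k hk
    rw [Finset.sum_mul]
    rw [Finset.mem_range] at hk
    have hlen : (w.take k).length = k := by rw [List.length_take]; omega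
    rw [hlen]
    refine Finset.sum_congr rfl fun j hj => ?_
    rw [Finset.mem_range] at hj
    rw [List.take_take, min_eq_left (by omega), List.drop_take]
  have hR : ∀ j ∈ Finset.range (w.length + 1),
      A (w.take j) * (∑ i ∈ Finset.range ((w.drop j).length + 1), B ((w.drop j).take i) * C ((w.drop j).drop i))
      = ∑ k ∈ Finset.Ico j (w.length + 1), A (w.take j) * B ((w.drop j).take (k - j)) * C (w.drop k) := by
    intro j hj
    rw [Finset.mem_range] at hj
    rw [Finset.mul_sum, List.length_drop, Finset.sum_Ico_eq_sum_range,
      show w.length + 1 - j = w.length - j + 1 from by omega]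
    refine Finset.sum_congr rfl fun i hi => ?_
    rw [List.drop_drop, show j + i - j = i from by omega, mul_assoc]
  rw [Finset.sum_congr rfl hL, Finset.sum_congr rfl hR]
  rw [← Nat.Ico_zero_eq_range, Finset.sum_Ico_Ico_comm]
  simp only [Finset.range_eq_Ico]

noncomputable def Ninv (M : List K → K) : List K → K
  | [] => 1
  | x :: xs => -∑ k ∈ Finset.range (xs.length + 1), M (x :: xs.take k) * Ninv M (xs.drop k)
termination_by l => l.length
decreasing_by simp [List.length_drop]

lemma mmul_Ninv (M : List K → K) (hM : M [] = 1) (w : List K) :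
    mmul M (Ninv M) w = one w := by
  cases w with
  | nil => simp [mmul, Ninv, hM, one]
  | cons x xs =>
    unfold mmul
    rw [List.length_cons, Finset.sum_range_succ']
    simp only [List.take_zero, List.drop_zero, hM, one_mul]
    have : ∀ k, (x :: xs).take (k + 1) = x :: xs.take k := fun k => rfl
    simp only [this, List.drop_succ_cons]
    rw [show Ninv M (x :: xs) = -∑ k ∈ Finset.range (xs.length + 1), M (x :: xs.take k) * Ninv M (xs.drop k) from by rw [Ninv]]
    rw [one_ne (by simp)]
    ring

def Hyp (w : List K) : Prop :=
  ∀ i j : ℕ, i < j → j ≤ w.length → ((w.take j).drop i).sum ≠ 0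

lemma Hyp.take {w : List K} (h : Hyp w) (k : ℕ) : Hyp (w.take k) := by
  intro i j hij hj
  rw [List.length_take] at hj
  rw [List.take_take, min_eq_left (by omega)]
  exact h i j hij (by omega)

lemma Hyp.drop {w : List K} (h : Hyp w) (k : ℕ) : Hyp (w.drop k) := by
  intro i j hij hj
  rw [List.length_drop] at hj
  rw [List.take_drop, List.drop_drop]
  exact h (k + i) (k + j) (by omega) (by omega)

lemma Hyp.prefix_sum {w : List K} (h : Hyp w) {j : ℕ} (h0 : 0 < j) (hj : j ≤ w.length) :
    (w.take j).sum ≠ 0 := by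
  have := h 0 j h0 hj
  simpa using this

lemma Hyp.suffix_sum {w : List K} (h : Hyp w) {j : ℕ} (hj : j < w.length) :
    (w.drop j).sum ≠ 0 := by
  have := h j w.length hj le_rfl
  rwa [List.take_length] at this

lemma paj_take {w : List K} {k : ℕ} (hk : k ≤ w.length) :
    paj (w.take k) = (∏ j ∈ Finset.range k, (w.take (j + 1)).sum)⁻¹ := by
  unfold paj
  rw [List.length_take, min_eq_left hk]
  congr 1
  refine Finset.prod_congr rfl fun j hj => ?_
  rw [Finset.mem_range] at hj
  rw [List.take_take, min_eq_left (by omega)]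

lemma mupaj_drop (w : List K) (k : ℕ) :
    mupaj (w.drop k) = (-1 : K) ^ (w.length - k) *
      (∏ j ∈ Finset.range (w.length - k), (w.drop (k + j)).sum)⁻¹ := by
  unfold mupaj
  rw [List.length_drop]
  congr 1
  congr 1
  refine Finset.prod_congr rfl fun j hj => ?_
  rw [List.drop_drop]

lemma midalg (a b s t p : K) (hs : s ≠ 0) (ht : t ≠ 0) (hst : s + t ≠ 0) :
    (a * s)⁻¹ * (p * -1 * (t * b)⁻¹) = (s + t)⁻¹ * (p * -1 * a⁻¹ * (t * b)⁻¹ - p * (a * s)⁻¹ * b⁻¹) := by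
  have hexp : (s + t) * (s⁻¹ * t⁻¹) = t⁻¹ + s⁻¹ := by
    rw [add_mul, ← mul_assoc, mul_inv_cancel₀ hs, one_mul, mul_comm s⁻¹ t⁻¹,
      ← mul_assoc, mul_inv_cancel₀ ht, one_mul]
  calc (a * s)⁻¹ * (p * -1 * (t * b)⁻¹)
      = -p * (a⁻¹ * b⁻¹ * (s⁻¹ * t⁻¹)) := by rw [mul_inv, mul_inv]; ring
    _ = -p * (a⁻¹ * b⁻¹ * ((s + t)⁻¹ * ((s + t) * (s⁻¹ * t⁻¹)))) := by
        rw [inv_mul_cancel_left₀ hst]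
    _ = (s + t)⁻¹ * (p * -1 * a⁻¹ * (t * b)⁻¹ - p * (a * s)⁻¹ * b⁻¹) := by
        rw [hexp, mul_inv, mul_inv]; ring

lemma telescope (n : ℕ) (hn : 1 ≤ n) (S T : ℕ → K) (tot : K)
    (hST : ∀ k, 1 ≤ k → k < n → S k + T k = tot)
    (hT0 : T 0 = tot) (hSn : S n = tot)
    (hS : ∀ j, 1 ≤ j → j ≤ n → S j ≠ 0) (hT : ∀ j, j < n → T j ≠ 0) :
    ∑ k ∈ Finset.range (n + 1),
      (∏ j ∈ Finset.range k, S (j + 1))⁻¹ *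
        ((-1 : K) ^ (n - k) * (∏ j ∈ Finset.range (n - k), T (k + j))⁻¹) = 0 := by
  have htot : tot ≠ 0 := hT0 ▸ hT 0 hn
  have hS' : ∀ j, 1 ≤ j → j ≤ n → S j ≠ 0 := hS
  have hT' : ∀ j, j < n → T j ≠ 0 := hT
  have hBsucc : ∀ k, k < n → (∏ j ∈ Finset.range (n - k), T (k + j))
      = T k * ∏ j ∈ Finset.range (n - (k + 1)), T ((k + 1) + j) := by
    intro k hk
    rw [show n - k = (n - (k + 1)) + 1 from by omega, Finset.prod_range_succ', add_zero,
      mul_comm]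
    congr 1
    exact Finset.prod_congr rfl fun j _ => by rw [show k + (j + 1) = (k + 1) + j from by omega]
  set g : ℕ → K := fun k => if k = 0 then 0 else if k = n + 1 then 0 else
      (-1 : K) ^ (n - k) * (∏ j ∈ Finset.range (k - 1), S (j + 1))⁻¹ *
        (∏ j ∈ Finset.range (n - k), T (k + j))⁻¹ with hg
  have key : ∀ k ∈ Finset.range (n + 1),
      (∏ j ∈ Finset.range k, S (j + 1))⁻¹ *
        ((-1 : K) ^ (n - k) * (∏ j ∈ Finset.range (n - k), T (k + j))⁻¹)
      = tot⁻¹ * (g k - g (k + 1)) := by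
    intro k hk
    rw [Finset.mem_range] at hk
    rcases eq_or_ne k 0 with rfl | hk0
    · -- k = 0
      obtain ⟨e, rfl⟩ : ∃ e, n = e + 1 := ⟨n - 1, by omega⟩
      rw [hBsucc 0 (by omega), hT0]
      simp only [hg, zero_add, if_true, eq_self_iff_true]
      rw [if_neg one_ne_zero, if_neg (by omega : ¬ (1 = e + 1 + 1))]
      simp only [Nat.sub_zero, Nat.sub_self, Nat.add_sub_cancel, Finset.prod_range_zero,
        inv_one, one_mul, mul_one]
      rw [mul_inv, pow_succ]
      ring
    · rcases eq_or_ne k n with heq | hkn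
      · -- k = n
        subst heq
        obtain ⟨e, rfl⟩ : ∃ e, k = e + 1 := ⟨k - 1, by omega⟩
        simp only [hg]
        rw [if_neg hk0, if_neg (by omega : ¬ (e + 1 = e + 1 + 1)),
          if_neg (by omega : ¬ (e + 1 + 1 = 0)), if_pos trivial]
        simp only [Nat.sub_self, Nat.add_sub_cancel, Finset.prod_range_zero, pow_zero,
          inv_one, mul_one, one_mul]
        rw [Finset.prod_range_succ, hSn, mul_inv]
        ring
      · -- middle case : 1 ≤ k ≤ n - 1
        have hk1 : 1 ≤ k := by omega
        have hklt : k < n := by omega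
        obtain ⟨e, he⟩ : ∃ e, n - k = e + 1 := ⟨n - k - 1, by omega⟩
        obtain ⟨i, rfl⟩ : ∃ i, k = i + 1 := ⟨k - 1, by omega⟩
        have hsum : S (i + 1) + T (i + 1) ≠ 0 := by
          rw [hST (i + 1) hk1 hklt]; exact htot
        have hs := hS (i + 1) (by omega) (by omega)
        have ht := hT (i + 1) hklt
        rw [hBsucc (i + 1) hklt]
        simp only [hg]
        rw [if_neg hk0, if_neg (by omega : ¬ (i + 1 = n + 1)),
          if_neg (by omega : ¬ (i + 1 + 1 = 0)), if_neg (by omega : ¬ (i + 1 + 1 = n + 1))]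
        rw [hBsucc (i + 1) hklt]
        simp only [Nat.add_sub_cancel]
        rw [he, show n - (i + 1 + 1) = e from by omega, Finset.prod_range_succ,
          ← hST (i + 1) hk1 hklt, pow_succ]
        exact midalg _ _ _ _ _ hs ht hsum
  rw [Finset.sum_congr rfl key, ← Finset.mul_sum, Finset.sum_range_sub' g (n + 1)]
  simp [hg]

lemma mupaj_nil : (mupaj : List K → K) [] = 1 := by simp [mupaj]

lemma mmul_congr_left {M M' N : List K → K} {w : List K}
    (hM : ∀ k, M (w.take k) = M' (w.take k)) : mmul M N w = mmul M' N w :=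
  Finset.sum_congr rfl fun k _ => by rw [hM k]

lemma mmul_congr_right {M N N' : List K → K} {w : List K}
    (hN : ∀ k, N (w.drop k) = N' (w.drop k)) : mmul M N w = mmul M N' w :=
  Finset.sum_congr rfl fun k _ => by rw [hN k]

lemma paj_mupaj {w : List K} (h : Hyp w) : mmul paj mupaj w = one w := by
  rcases eq_or_ne w [] with rfl | hw
  · simp [mmul, paj, mupaj, one]
  · have hn : 1 ≤ w.length := List.length_pos_iff.mpr hw
    rw [one_ne hw]
    unfold mmul
    have hcongr : ∀ k ∈ Finset.range (w.length + 1),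
        paj (w.take k) * mupaj (w.drop k) =
        (∏ j ∈ Finset.range k, (w.take (j + 1)).sum)⁻¹ *
          ((-1 : K) ^ (w.length - k) *
            (∏ j ∈ Finset.range (w.length - k), (w.drop (k + j)).sum)⁻¹) := by
      intro k hk
      rw [Finset.mem_range] at hk
      rw [paj_take (by omega), mupaj_drop]
    rw [Finset.sum_congr rfl hcongr]
    exact telescope w.length hn (fun j => (w.take j).sum) (fun j => (w.drop j).sum) w.sum
      (fun k _ _ => List.sum_take_add_sum_drop w k)
      (by simp) (by simp)
      (fun j h1 hj => h.prefix_sum h1 hj) (fun j hj => h.suffix_sum hj)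

lemma Ninv_eq_paj {w : List K} (h : Hyp w) : Ninv mupaj w = paj w :=
  calc Ninv mupaj w = mmul one (Ninv mupaj) w := (mmul_one_left _ _).symm
    _ = mmul (mmul paj mupaj) (Ninv mupaj) w :=
        (mmul_congr_left (fun k => paj_mupaj (h.take k))).symm
    _ = mmul paj (mmul mupaj (Ninv mupaj)) w := mmul_assoc _ _ _ _
    _ = mmul paj one w := mmul_congr_right (fun k => mmul_Ninv mupaj mupaj_nil (w.drop k))
    _ = paj w := mmul_one_right _ _

lemma mupaj_paj {w : List K} (h : Hyp w) : mmul mupaj paj w = one w :=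
  calc mmul mupaj paj w = mmul mupaj (Ninv mupaj) w :=
        mmul_congr_right (fun k => (Ninv_eq_paj (h.drop k)).symm)
    _ = one w := mmul_Ninv mupaj mupaj_nil w

lemma hyp_xv (m : ℕ) : Hyp ((List.range m).map Xv) := by
  intro i j hij hj
  rw [List.length_map, List.length_range] at hj
  rw [← List.map_take, ← List.map_drop]
  set l : List ℕ := ((List.range m).take j).drop i with hl
  have hlen : l.length = j - i := by
    simp [hl, List.length_drop, List.length_take]
    omega
  have hne : l.length ≠ 0 := by omega
  have key : (l.map Xv).sum = algebraMap (MvPolynomial ℕ ℚ) KK ((l.map MvPolynomial.X).sum) := by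
    rw [map_list_sum, List.map_map]
    rfl
  rw [key]
  intro h0
  have h1 : (l.map (MvPolynomial.X : ℕ → MvPolynomial ℕ ℚ)).sum = 0 := by
    apply IsFractionRing.injective (MvPolynomial ℕ ℚ) KK
    rw [h0, map_zero]
  have h2 := congrArg (MvPolynomial.eval (fun _ => (1 : ℚ))) h1
  rw [map_list_sum, List.map_map, map_zero] at h2
  rw [show (⇑(MvPolynomial.eval fun _ => (1 : ℚ)) ∘ MvPolynomial.X) = fun _ : ℕ => (1 : ℚ) from
    funext fun i => MvPolynomial.eval_X _] at h2
  rw [List.map_const', List.sum_replicate, nsmul_eq_mul, mul_one] at h2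
  exact hne (by exact_mod_cast h2)

/-- `mupaj` is the ×-inverse of `paj`: `paj × mupaj = mupaj × paj = 1`,
as an identity of moulds in the formal variables `x_0, x_1, …`. -/
theorem stmt15 (m : ℕ) :
    mmul paj mupaj ((List.range m).map Xv) = one ((List.range m).map Xv) ∧
      mmul mupaj paj ((List.range m).map Xv) = one ((List.range m).map Xv) :=
  ⟨paj_mupaj (hyp_xv m), mupaj_paj (hyp_xv m)⟩
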